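/- Let (R,B) be a ℤ-based rng and B' ⊆ B a closed subset. Then B' is invariant under the involution: ~b ∈ B' for every b ∈ B', and consequently the ℤ-span of B' is ~-invariant. -/

import Mathlib

open scoped BigOperators

/-- Trace argument: a normal integer matrix with vanishing upper-right block
(w.r.t. a subset `s`) also has vanishing lower-left block. -/
lemma traceBlockAux {n : ℕ} (s : Finset (Fin n)) (T : Fin n → Fin n → ℤ)
    (hnorm : ∀ k l, (∑ m, T k m * T l m) = ∑ m, T m k * T m l)
    (hblock : ∀ k ∈ s, ∀ m ∉ s, T k m = 0) :
    ∀ k ∉ s, ∀ m ∈ s, T k m = 0 := by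
  classical
  have e2 : ∀ k ∈ s, (∑ m, T k m * T k m) = ∑ m ∈ s, T k m * T k m := by
    intro k hk
    rw [← Finset.sum_add_sum_compl s fun m => T k m * T k m]
    have h0 : (∑ m ∈ sᶜ, T k m * T k m) = 0 :=
      Finset.sum_eq_zero fun m hm => by
        rw [hblock k hk m (Finset.mem_compl.mp hm), mul_zero]
    rw [h0, add_zero]
  have L : (∑ k ∈ s, ∑ m ∈ s, T k m * T k m)
      = (∑ k ∈ s, ∑ m ∈ s, T m k * T m k) + ∑ k ∈ s, ∑ m ∈ sᶜ, T m k * T m k := by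
    calc (∑ k ∈ s, ∑ m ∈ s, T k m * T k m)
        = ∑ k ∈ s, ∑ m, T k m * T k m := by
          exact (Finset.sum_congr rfl e2).symm
      _ = ∑ k ∈ s, ∑ m, T m k * T m k := Finset.sum_congr rfl fun k _ => hnorm k k
      _ = ∑ k ∈ s, ((∑ m ∈ s, T m k * T m k) + ∑ m ∈ sᶜ, T m k * T m k) :=
          Finset.sum_congr rfl fun k _ =>
            (Finset.sum_add_sum_compl s fun m => T m k * T m k).symm
      _ = (∑ k ∈ s, ∑ m ∈ s, T m k * T m k) + ∑ k ∈ s, ∑ m ∈ sᶜ, T m k * T m k :=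
          Finset.sum_add_distrib
  have comm : (∑ k ∈ s, ∑ m ∈ s, T k m * T k m)
      = ∑ k ∈ s, ∑ m ∈ s, T m k * T m k := Finset.sum_comm
  have key : (∑ k ∈ s, ∑ m ∈ sᶜ, T m k * T m k) = 0 := by
    omega
  intro k hk m hm
  have h1 : (∑ m' ∈ sᶜ, T m' m * T m' m) = 0 :=
    (Finset.sum_eq_zero_iff_of_nonneg fun x _ =>
      Finset.sum_nonneg fun y _ => mul_self_nonneg (T y x)).mp key m hm
  have h2 : T k m * T k m = 0 :=
    (Finset.sum_eq_zero_iff_of_nonneg fun y _ => mul_self_nonneg (T y m)).mp h1 k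
      (Finset.mem_compl.mpr hk)
  exact mul_self_eq_zero.mp h2

/-- Let `(R,B)` be a `ℤ`-based rng and `B' ⊆ B` a closed
subset (its `ℤ`-span is closed under multiplication).  Then `B'` is invariant
under the involution: `~b ∈ B'` for every `b ∈ B'` (hence the `ℤ`-span of `B'`
is `~`-invariant). -/
theorem zBasedRng_closed_subset_involution_invariant
    {n : ℕ} (A : Type*) [CommRing A] [Algebra ℂ A]
    (b : Module.Basis (Fin n) ℂ A) (N : Fin n → Fin n → Fin n → ℤ) (σ : Fin n → Fin n)
    (hmul : ∀ i j, b i * b j = ∑ m, (N i j m : ℂ) • b m)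
    (hσ : ∀ i, σ (σ i) = i)
    (hσN : ∀ i j m, N (σ i) (σ j) m = N i j (σ m))
    (hτ : ∀ i j, (∑ m, (starRingEnd ℂ) (b.repr 1 m) * (N (σ i) j m : ℂ)) =
      if i = j then (1 : ℂ) else 0)
    (he : ∀ j, (starRingEnd ℂ) (b.repr 1 (σ j)) = b.repr 1 j)
    (B' : Set (Fin n))
    (hclosed : ∀ x ∈ Submodule.span ℤ (⇑b '' B'), ∀ y ∈ Submodule.span ℤ (⇑b '' B'),
      x * y ∈ Submodule.span ℤ (⇑b '' B')) :
    ∀ i ∈ B', σ i ∈ B' := by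
  classical
  have hrepr : ∀ (f : Fin n → ℂ) k, b.repr (∑ m, f m • b m) k = f k :=
    fun f k => congrFun (b.repr_sum_self f) k
  have reprMul : ∀ i j m, b.repr (b i * b j) m = (N i j m : ℂ) := by
    intro i j m
    rw [hmul i j, hrepr]
  have Nsymm : ∀ i j m, N i j m = N j i m := by
    intro i j m
    have h : ((N i j m : ℤ) : ℂ) = ((N j i m : ℤ) : ℂ) := by
      rw [← reprMul, ← reprMul, mul_comm]
    exact_mod_cast h
  -- repr of triple products
  have trip1 : ∀ x y z k, b.repr (b x * b y * b z) k
      = ∑ p, (N x y p : ℂ) * (N p z k : ℂ) := by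
    intro x y z k
    have key : b x * b y * b z = ∑ m, (∑ p, (N x y p : ℂ) * (N p z m : ℂ)) • b m := by
      rw [hmul x y, Finset.sum_mul]
      simp_rw [smul_mul_assoc, hmul, Finset.smul_sum, smul_smul]
      rw [Finset.sum_comm]
      simp_rw [← Finset.sum_smul]
    rw [key, hrepr]
  have trip2 : ∀ x y z k, b.repr (b x * (b y * b z)) k
      = ∑ p, (N y z p : ℂ) * (N x p k : ℂ) := by
    intro x y z k
    have key : b x * (b y * b z) = ∑ m, (∑ p, (N y z p : ℂ) * (N x p m : ℂ)) • b m := by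
      rw [hmul y z, Finset.mul_sum]
      simp_rw [mul_smul_comm, hmul x, Finset.smul_sum, smul_smul]
      rw [Finset.sum_comm]
      simp_rw [← Finset.sum_smul]
    rw [key, hrepr]
  -- collapse lemma for sums against the involution
  have collapse : ∀ (f : Fin n → ℂ) (a : Fin n),
      (∑ p, f p * (if σ p = a then (1:ℂ) else 0)) = f (σ a) := by
    intro f a
    have hterm : ∀ p : Fin n, f p * (if σ p = a then (1:ℂ) else 0)
        = if p = σ a then f p else 0 := by
      intro p
      by_cases h : p = σ a
      · subst h; simp [hσ]
      · have h2 : σ p ≠ a := fun hc => h (by rw [← hc, hσ])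
        simp [h, h2]
    rw [Finset.sum_congr rfl fun p _ => hterm p, Finset.sum_ite_eq']
    simp
  -- Frobenius relation
  have E : ∀ c a d, N (σ c) a d = N c d a := by
    intro c a d
    have w2 : (∑ m, (starRingEnd ℂ) (b.repr 1 m) * b.repr (b (σ d) * (b (σ c) * b a)) m)
        = (N (σ c) a d : ℂ) := by
      simp_rw [trip2]
      calc (∑ m, (starRingEnd ℂ) (b.repr 1 m) * ∑ p, (N (σ c) a p : ℂ) * (N (σ d) p m : ℂ))
          = ∑ p, (N (σ c) a p : ℂ)
              * ∑ m, (starRingEnd ℂ) (b.repr 1 m) * (N (σ d) p m : ℂ) := by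
            simp_rw [Finset.mul_sum]
            rw [Finset.sum_comm]
            exact Finset.sum_congr rfl fun p _ =>
              Finset.sum_congr rfl fun m _ => by ring
        _ = ∑ p, (N (σ c) a p : ℂ) * (if d = p then (1:ℂ) else 0) :=
            Finset.sum_congr rfl fun p _ => by rw [hτ d p]
        _ = (N (σ c) a d : ℂ) := by simp [mul_ite, Finset.sum_ite_eq]
    have w1 : (∑ m, (starRingEnd ℂ) (b.repr 1 m) * b.repr (b (σ d) * (b (σ c) * b a)) m)
        = (N c d a : ℂ) := by
      rw [← mul_assoc (b (σ d)) (b (σ c)) (b a)]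
      simp_rw [trip1, hσN d c]
      calc (∑ m, (starRingEnd ℂ) (b.repr 1 m) * ∑ p, (N d c (σ p) : ℂ) * (N p a m : ℂ))
          = ∑ p, (N d c (σ p) : ℂ)
              * ∑ m, (starRingEnd ℂ) (b.repr 1 m) * (N p a m : ℂ) := by
            simp_rw [Finset.mul_sum]
            rw [Finset.sum_comm]
            exact Finset.sum_congr rfl fun p _ =>
              Finset.sum_congr rfl fun m _ => by ring
        _ = ∑ p, (N d c (σ p) : ℂ) * (if σ p = a then (1:ℂ) else 0) := by
            refine Finset.sum_congr rfl fun p _ => ?_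
            have h := hτ (σ p) a
            rw [hσ p] at h
            rw [h]
        _ = (N d c (σ (σ a)) : ℂ) := collapse (fun p => (N d c (σ p) : ℂ)) a
        _ = (N c d a : ℂ) := by rw [hσ, Nsymm d c a]
    have : ((N (σ c) a d : ℤ) : ℂ) = ((N c d a : ℤ) : ℂ) := w2.symm.trans w1
    exact_mod_cast this
  -- span vanishing lemma
  have H : ∀ x ∈ Submodule.span ℤ (⇑b '' B'), ∀ m, m ∉ B' → b.repr x m = 0 := by
    intro x hx
    refine Submodule.span_induction (p := fun x _ => ∀ m, m ∉ B' → b.repr x m = 0)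
      ?_ ?_ ?_ ?_ hx
    · rintro x ⟨j, hj, rfl⟩ m hm
      rw [b.repr_self]
      exact Finsupp.single_eq_of_ne fun h => hm (h ▸ hj)
    · intro m _; simp
    · intro x y _ _ ihx ihy m hm
      rw [map_add, Finsupp.add_apply, ihx m hm, ihy m hm, add_zero]
    · intro a x _ ih m hm
      rw [← Int.cast_smul_eq_zsmul ℂ, map_smul, Finsupp.smul_apply, ih m hm, smul_zero]
  -- closedness at the level of structure constants
  have NcB : ∀ j ∈ B', ∀ p ∈ B', ∀ m, m ∉ B' → (N j p m : ℂ) = 0 := by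
    intro j hj p hp m hm
    rw [← reprMul]
    refine H _ (hclosed _ ?_ _ ?_) m hm
    · exact Submodule.subset_span (Set.mem_image_of_mem _ hj)
    · exact Submodule.subset_span (Set.mem_image_of_mem _ hp)
  have NcBZ : ∀ j ∈ B', ∀ p ∈ B', ∀ m, m ∉ B' → N j p m = 0 := by
    intro j hj p hp m hm
    exact_mod_cast NcB j hj p hp m hm
  -- commuting of multiplication matrices
  have F : ∀ i k l, (∑ m, N (σ i) m k * N i l m) = ∑ m, N i m k * N (σ i) l m := by
    intro i k l
    have h : ((∑ m, N (σ i) m k * N i l m : ℤ) : ℂ)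
        = ((∑ m, N i m k * N (σ i) l m : ℤ) : ℂ) := by
      push_cast
      calc (∑ m, (N (σ i) m k : ℂ) * (N i l m : ℂ))
          = ∑ m, (N i l m : ℂ) * (N (σ i) m k : ℂ) := by
            exact Finset.sum_congr rfl fun m _ => mul_comm _ _
        _ = b.repr (b (σ i) * (b i * b l)) k := (trip2 (σ i) i l k).symm
        _ = b.repr (b i * (b (σ i) * b l)) k := by rw [mul_left_comm]
        _ = ∑ m, (N (σ i) l m : ℂ) * (N i m k : ℂ) := trip2 i (σ i) l k
        _ = ∑ m, (N i m k : ℂ) * (N (σ i) l m : ℂ) := by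
            exact Finset.sum_congr rfl fun m _ => mul_comm _ _
    exact_mod_cast h
  -- main argument
  intro i hi
  by_contra hσi
  set s : Finset (Fin n) := Finset.univ.filter (· ∈ B') with hs
  have hmem : ∀ k, k ∈ s ↔ k ∈ B' := by
    intro k; simp [hs]
  have hblock : ∀ k ∈ s, ∀ m ∉ s, N (σ i) m k = 0 := by
    intro k hk m hm
    rw [E i m k]
    exact NcBZ i hi k ((hmem k).mp hk) m (fun h => hm ((hmem m).mpr h))
  have hnorm : ∀ k l, (∑ m, N (σ i) m k * N (σ i) m l) = ∑ m, N (σ i) k m * N (σ i) l m := by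
    intro k l
    have hF := F i k l
    simp_rw [E i] at hF ⊢
    exact hF
  have blockZero := traceBlockAux s (fun k m => N (σ i) m k) hnorm hblock
  have diamond : ∀ k, k ∉ B' → ∀ m ∈ B', N (σ i) m k = 0 := by
    intro k hk m hm
    exact blockZero k (fun h => hk ((hmem k).mp h)) m ((hmem m).mpr hm)
  -- decomposition of 1
  set u : A := ∑ m ∈ s, (b.repr 1 m) • b m with hu
  set w : A := ∑ m ∈ sᶜ, (b.repr 1 m) • b m with hw
  have huw : u + w = 1 := by
    rw [hu, hw, Finset.sum_add_sum_compl]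
    exact b.sum_repr 1
  have reprMulSum : ∀ (t : Finset (Fin n)) j k,
      b.repr (b j * ∑ m ∈ t, (b.repr 1 m) • b m) k
        = ∑ m ∈ t, (b.repr 1 m) * (N j m k : ℂ) := by
    intro t j k
    rw [Finset.mul_sum]
    simp_rw [mul_smul_comm]
    rw [map_sum, Finset.sum_apply']
    simp_rw [map_smul, Finsupp.smul_apply, reprMul, smul_eq_mul]
  have hbiu0 : ∀ k, k ∉ B' → b.repr (b i * u) k = 0 := by
    intro k hk
    rw [hu, reprMulSum]
    refine Finset.sum_eq_zero fun m hm => ?_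
    rw [NcB i hi m ((hmem m).mp hm) k hk, mul_zero]
  have hbiw : b i * w = 0 := by
    have hsum : b i * u + b i * w = b i := by rw [← mul_add, huw, mul_one]
    refine b.ext_elem fun k => ?_
    rw [map_zero, Finsupp.zero_apply]
    by_cases hk : k ∈ B'
    · rw [hw, reprMulSum]
      refine Finset.sum_eq_zero fun m hm => ?_
      have hm' : m ∉ B' := fun h => (Finset.mem_compl.mp hm) ((hmem m).mpr h)
      have hE : N i m k = N (σ i) k m := by
        have h := E (σ i) m k
        rwa [hσ i] at h
      have : (N i m k : ℂ) = 0 := by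
        rw [hE, diamond m hm' k hk, Int.cast_zero]
      rw [this, mul_zero]
    · have heq : b i * w = b i - b i * u := eq_sub_of_add_eq' hsum
      rw [heq, map_sub, Finsupp.sub_apply, hbiu0 k hk, sub_zero, b.repr_self]
      exact Finsupp.single_eq_of_ne fun h => hk (h ▸ hi)
  have hbiu_eq : b i * u = b i := by
    have hsum : b i * u + b i * w = b i := by rw [← mul_add, huw, mul_one]
    rwa [hbiw, add_zero] at hsum
  have hσiu : b (σ i) * u = 0 := by
    have hsum : b (σ i) * u + b (σ i) * w = b (σ i) := by rw [← mul_add, huw, mul_one]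
    refine b.ext_elem fun k => ?_
    rw [map_zero, Finsupp.zero_apply]
    by_cases hk : k ∈ B'
    · have hwk : b.repr (b (σ i) * w) k = 0 := by
        rw [hw, reprMulSum]
        refine Finset.sum_eq_zero fun m hm => ?_
        have hm' : m ∉ B' := fun h => (Finset.mem_compl.mp hm) ((hmem m).mpr h)
        have : (N (σ i) m k : ℂ) = 0 := by
          rw [E i m k]
          exact NcB i hi k hk m hm'
        rw [this, mul_zero]
      have heq : b (σ i) * u = b (σ i) - b (σ i) * w := eq_sub_of_add_eq hsum
      rw [heq, map_sub, Finsupp.sub_apply, hwk, sub_zero, b.repr_self]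
      exact Finsupp.single_eq_of_ne fun h => hσi (h ▸ hk)
    · rw [hu, reprMulSum]
      refine Finset.sum_eq_zero fun m hm => ?_
      rw [diamond k hk m ((hmem m).mp hm), Int.cast_zero, mul_zero]
  have hprod : b (σ i) * b i = 0 := by
    calc b (σ i) * b i = b (σ i) * (b i * u) := by rw [hbiu_eq]
      _ = (b (σ i) * u) * b i := by ring
      _ = 0 := by rw [hσiu, zero_mul]
  have hN0 : ∀ m, (N (σ i) i m : ℂ) = 0 := by
    intro m
    rw [← reprMul, hprod, map_zero, Finsupp.zero_apply]
  have h1 := hτ i i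
  rw [if_pos rfl] at h1
  have h0 : (∑ m, (starRingEnd ℂ) (b.repr 1 m) * (N (σ i) i m : ℂ)) = 0 :=
    Finset.sum_eq_zero fun m _ => by rw [hN0 m, mul_zero]
  rw [h0] at h1
  exact zero_ne_one h1
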